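/- Let n be a positive integer, H a complex Hilbert space, Σ ⊆ 𝔽ₙ⁺ a nonempty admissible set, and L : Σ → B(H). Then there exists a row contraction (T₁,…,Tₙ) on H such that T_σ L(g₀) = L(σ) for every σ ∈ Σ — equivalently, L is a moment map for Poisson transforms on the Cuntz–Toeplitz algebra C*(S₁,…,Sₙ) — if and only if K₁ ≤ K₂. -/

import Mathlib

/-!
Statement 0: operator-valued moment problem for Poisson transforms on the
Cuntz–Toeplitz algebra, stated in the equivalent row-contraction form.
-/

open scoped InnerProductSpace ComplexOrder ComplexInnerProductSpace Classical
open ContinuousLinearMap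
set_option linter.unusedSectionVars false
set_option maxHeartbeats 1000000

noncomputable section

/-- Words in the free monoid `𝔽ₙ⁺` on `n` generators (the empty word is `g₀`). -/
abbrev Wd (n : ℕ) := List (Fin n)

/-- A set `Σ ⊆ 𝔽ₙ⁺` is admissible if `αβ ∈ Σ` implies `β ∈ Σ`. -/
def Adm {n : ℕ} (S : Set (Wd n)) : Prop := ∀ α β : Wd n, α ++ β ∈ S → β ∈ S

/-- `σ ≤ α` : `σ` is a prefix of `α`, i.e. `α = στ` for some `τ`. -/
def pfx {n : ℕ} (σ α : Wd n) : Prop := ∃ τ : Wd n, α = σ ++ τ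

/-- `α ∖ σ` : the unique `τ` with `α = στ` when `σ ≤ α`. -/
def wq {n : ℕ} (α σ : Wd n) : Wd n := α.drop σ.length

variable {H : Type*} [NormedAddCommGroup H] [InnerProductSpace ℂ H] [CompleteSpace H]

/-- `T_α = T_{i₁} ⋯ T_{i_k}` for a word `α = g_{i₁} ⋯ g_{i_k}`, `T_{g₀} = I`. -/
def wordOp {n : ℕ} (T : Fin n → (H →L[ℂ] H)) (α : Wd n) : H →L[ℂ] H := (α.map T).prod

/-- `(T₁, …, Tₙ)` is a row contraction: `T₁T₁* + ⋯ + TₙTₙ* ≤ I`. -/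
def RowContraction {n : ℕ} (T : Fin n → (H →L[ℂ] H)) : Prop :=
  ((1 : H →L[ℂ] H) - ∑ i, T i * adjoint (T i)).IsPositive

/-- An operator-valued kernel `K` on `X` is positive semidefinite if
`∑_{x,y} ⟨K(x,y) h(y), h(x)⟩ ≥ 0` for all finitely supported `h : X → H`. -/
def KerPSD {X : Type*} (K : X → X → (H →L[ℂ] H)) : Prop :=
  ∀ (s : Finset X) (h : X → H), 0 ≤ ∑ x ∈ s, ∑ y ∈ s, ⟪h x, (K x y) (h y)⟫_ℂ

/-- `K₁((α,β),(σ,γ)) = L(αβ)* L(σγ)`. -/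
def K1 {n : ℕ} (L : Wd n → (H →L[ℂ] H)) (x y : Wd n × Wd n) : H →L[ℂ] H :=
  adjoint (L (x.1 ++ x.2)) * L (y.1 ++ y.2)

/-- `K₂((α,β),(σ,γ)) = L(β)* L((σ∖α)γ)` if `α ≤ σ`, `L((α∖σ)β)* L(γ)` if `σ < α`,
and `0` otherwise. -/
def K2 {n : ℕ} (L : Wd n → (H →L[ℂ] H)) (x y : Wd n × Wd n) : H →L[ℂ] H :=
  if pfx x.1 y.1 then adjoint (L x.2) * L (wq y.1 x.1 ++ y.2)
  else if pfx y.1 x.1 then adjoint (L (wq x.1 y.1 ++ x.2)) * L y.2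
  else 0



lemma wordOp_nil {n : ℕ} (T : Fin n → (H →L[ℂ] H)) : wordOp T ([] : Wd n) = 1 := rfl

lemma wordOp_cons {n : ℕ} (T : Fin n → (H →L[ℂ] H)) (i : Fin n) (α : Wd n) :
    wordOp T (i :: α) = T i * wordOp T α := by
  simp [wordOp]

lemma wordOp_append {n : ℕ} (T : Fin n → (H →L[ℂ] H)) (α β : Wd n) :
    wordOp T (α ++ β) = wordOp T α * wordOp T β := by
  simp [wordOp]

/-- The multi-Toeplitz kernel associated to a tuple `T`. -/
def tker {n : ℕ} (T : Fin n → (H →L[ℂ] H)) (α σ : Wd n) : H →L[ℂ] H :=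
  if pfx α σ then wordOp T (wq σ α)
  else if pfx σ α then adjoint (wordOp T (wq α σ))
  else 0

lemma pfx_nil {n : ℕ} (σ : Wd n) : pfx [] σ := ⟨σ, rfl⟩

lemma pfx_nil_iff {n : ℕ} (α : Wd n) : pfx α [] ↔ α = [] := by
  constructor
  · rintro ⟨τ, hτ⟩; exact List.append_eq_nil_iff.mp hτ.symm |>.1
  · rintro rfl; exact pfx_nil []

lemma pfx_cons_iff {n : ℕ} (i j : Fin n) (α σ : Wd n) :
    pfx (i :: α) (j :: σ) ↔ i = j ∧ pfx α σ := by
  constructor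
  · rintro ⟨τ, hτ⟩
    simp only [List.cons_append, List.cons.injEq] at hτ
    exact ⟨hτ.1.symm, τ, hτ.2⟩
  · rintro ⟨rfl, τ, rfl⟩; exact ⟨τ, rfl⟩

lemma tker_nil_left {n : ℕ} (T : Fin n → (H →L[ℂ] H)) (σ : Wd n) :
    tker T [] σ = wordOp T σ := by
  simp [tker, pfx_nil, wq]

lemma tker_nil_right {n : ℕ} (T : Fin n → (H →L[ℂ] H)) (α : Wd n) :
    tker T α [] = adjoint (wordOp T α) := by
  rcases eq_or_ne α [] with rfl | h
  · rw [tker_nil_left, wordOp_nil]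
    exact ContinuousLinearMap.adjoint_id.symm
  · rw [tker, if_neg, if_pos (pfx_nil α)]
    · simp [wq]
    · rw [pfx_nil_iff]; exact h

lemma tker_cons_cons {n : ℕ} (T : Fin n → (H →L[ℂ] H)) (i j : Fin n) (α σ : Wd n) :
    tker T (i :: α) (j :: σ) = if i = j then tker T α σ else 0 := by
  rcases eq_or_ne i j with rfl | h
  · simp only [if_pos rfl, tker, pfx_cons_iff]
    have hwq : ∀ β γ : Wd n, wq (i :: β) (i :: γ) = wq β γ := by
      intro β γ; simp [wq]
    rw [hwq, hwq]
    simp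
  · simp only [tker, pfx_cons_iff, h, h.symm, false_and, if_neg, if_neg, if_false]



lemma rc_apply {n : ℕ} (T : Fin n → (H →L[ℂ] H)) (x : H) :
    (((1 : H →L[ℂ] H) - ∑ i, T i * adjoint (T i)).reApplyInnerSelf x)
      = ‖x‖^2 - ∑ i, ‖adjoint (T i) x‖^2 := by
  rw [ContinuousLinearMap.reApplyInnerSelf_apply]
  simp only [ContinuousLinearMap.sub_apply, ContinuousLinearMap.one_apply,
    ContinuousLinearMap.sum_apply, ContinuousLinearMap.mul_apply,
    inner_sub_left, sum_inner, map_sub, map_sum]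
  congr 1
  · exact inner_self_eq_norm_sq (𝕜 := ℂ) x
  · refine Finset.sum_congr rfl fun i _ => ?_
    rw [← ContinuousLinearMap.adjoint_inner_right (T i) (adjoint (T i) x) x]
    exact inner_self_eq_norm_sq (𝕜 := ℂ) _

lemma rowContraction_iff {n : ℕ} (T : Fin n → (H →L[ℂ] H)) :
    RowContraction T ↔ ∀ x : H, ∑ i, ‖adjoint (T i) x‖^2 ≤ ‖x‖^2 := by
  constructor
  · intro hT x
    have := hT.2 x
    rw [rc_apply] at this; linarith
  · intro h
    constructor
    · rw [← ContinuousLinearMap.isSelfAdjoint_iff_isSymmetric]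
      unfold IsSelfAdjoint
      simp only [star_sub, star_one, star_sum, star_mul,
        ContinuousLinearMap.star_eq_adjoint, ContinuousLinearMap.adjoint_adjoint]
    · intro x
      rw [rc_apply]
      have := h x; linarith

/-- column estimate from row contraction -/
lemma col_est {n : ℕ} {T : Fin n → (H →L[ℂ] H)} (hT : RowContraction T)
    (v : Fin n → H) : ‖∑ i, T i (v i)‖^2 ≤ ∑ i, ‖v i‖^2 := by
  have hadj := (rowContraction_iff T).mp hT
  set w := ∑ i, T i (v i) with hw
  have h1 : ‖w‖^2 ≤ ∑ i, ‖v i‖ * ‖adjoint (T i) w‖ := by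
    have hww : (‖w‖^2 : ℝ) = RCLike.re ⟪w, w⟫_ℂ := (inner_self_eq_norm_sq (𝕜 := ℂ) w).symm
    rw [hww]
    nth_rewrite 1 [hw]
    rw [sum_inner, map_sum]
    refine Finset.sum_le_sum fun i _ => ?_
    rw [← ContinuousLinearMap.adjoint_inner_right (T i) (v i) w]
    exact re_inner_le_norm (𝕜 := ℂ) _ _
  have h2 : (∑ i, ‖v i‖ * ‖adjoint (T i) w‖)^2
      ≤ (∑ i, ‖v i‖^2) * (∑ i, ‖adjoint (T i) w‖^2) :=
    Finset.sum_mul_sq_le_sq_mul_sq Finset.univ _ _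
  have h3 := hadj w
  have hA : (0:ℝ) ≤ ∑ i, ‖v i‖ * ‖adjoint (T i) w‖ :=
    Finset.sum_nonneg fun i _ => mul_nonneg (norm_nonneg _) (norm_nonneg _)
  have hB : (0:ℝ) ≤ ∑ i, ‖v i‖^2 := Finset.sum_nonneg fun i _ => sq_nonneg _
  nlinarith [sq_nonneg (‖w‖:ℝ), sq_nonneg (‖w‖^2 - ∑ i, ‖v i‖^2)]

/-- row contraction from column estimate -/
lemma rc_of_col {n : ℕ} {T : Fin n → (H →L[ℂ] H)}
    (hcol : ∀ v : Fin n → H, ‖∑ i, T i (v i)‖^2 ≤ ∑ i, ‖v i‖^2) :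
    RowContraction T := by
  rw [rowContraction_iff]
  intro x
  set u := ∑ i, ‖adjoint (T i) x‖^2 with hu
  have hu0 : (0:ℝ) ≤ u := Finset.sum_nonneg fun i _ => sq_nonneg _
  set y := ∑ i, T i (adjoint (T i) x) with hy
  have hB : ‖y‖^2 ≤ u := hcol _
  have h1 : u ≤ ‖x‖ * ‖y‖ := by
    have huy : (u : ℝ) = RCLike.re ⟪x, y⟫_ℂ := by
      rw [hy, inner_sum, map_sum]
      refine Finset.sum_congr rfl fun i _ => ?_
      rw [← ContinuousLinearMap.adjoint_inner_left (T i) (adjoint (T i) x) x]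
      exact (inner_self_eq_norm_sq (𝕜 := ℂ) _).symm
    rw [huy]
    exact re_inner_le_norm (𝕜 := ℂ) _ _
  nlinarith [norm_nonneg y, norm_nonneg x, sq_nonneg (‖x‖ - ‖y‖)]


/-- Finset of words of length at most `N`. -/
def wds (n : ℕ) : ℕ → Finset (Wd n)
  | 0 => {[]}
  | N+1 => insert [] (Finset.univ.biUnion fun i : Fin n => (wds n N).image (List.cons i))

lemma mem_wds {n N : ℕ} {α : Wd n} : α ∈ wds n N ↔ α.length ≤ N := by
  induction N generalizing α with
  | zero => cases α <;> simp [wds]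
  | succ N IH =>
    cases α with
    | nil => simp [wds]
    | cons i α' => simp [wds, IH]

lemma sum_wds_succ {n N : ℕ} {M : Type*} [AddCommMonoid M] (f : Wd n → M) :
    ∑ α ∈ wds n (N+1), f α = f [] + ∑ i, ∑ α ∈ wds n N, f (i :: α) := by
  show ∑ α ∈ insert [] (Finset.univ.biUnion fun i : Fin n => (wds n N).image (List.cons i)), f α = _
  rw [Finset.sum_insert (by simp)]
  congr 1
  rw [Finset.sum_biUnion]
  · refine Finset.sum_congr rfl fun i _ => Finset.sum_image ?_
    intro x _ y _ h
    simpa using h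
  · intro i _ j _ hij
    simp only [Finset.disjoint_left, Finset.mem_image]
    rintro a ⟨x, _, rfl⟩ ⟨y, _, hxy⟩
    have : i = j ∧ x = y := by simpa using hxy.symm
    exact hij this.1

lemma tker_psd {n : ℕ} {T : Fin n → (H →L[ℂ] H)} (hT : RowContraction T) :
    ∀ (N : ℕ) (g : Wd n → H),
      ‖∑ α ∈ wds n N, wordOp T α (g α)‖^2
        ≤ RCLike.re (∑ α ∈ wds n N, ∑ σ ∈ wds n N, ⟪g α, tker T α σ (g σ)⟫_ℂ) := by
  intro N
  induction N with
  | zero =>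
    intro g
    rw [show wds n 0 = {[]} from rfl]
    rw [Finset.sum_singleton, Finset.sum_singleton, Finset.sum_singleton]
    rw [tker_nil_left, wordOp_nil]
    simp only [ContinuousLinearMap.one_apply]
    rw [inner_self_eq_norm_sq (𝕜 := ℂ)]
  | succ N IH =>
    intro g
    set F := wds n N with hF
    set h0 := g ([] : Wd n) with hh0
    set v : Fin n → H := fun i => ∑ α ∈ F, wordOp T α (g (i :: α)) with hv
    set u : H := ∑ i, T i (v i) with huu
    have hW : ∑ α ∈ wds n (N+1), wordOp T α (g α) = h0 + u := by
      rw [sum_wds_succ (f := fun α => wordOp T α (g α))]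
      simp only [wordOp_nil, ContinuousLinearMap.one_apply, wordOp_cons,
        ContinuousLinearMap.mul_apply]
      congr 1
      exact Finset.sum_congr rfl fun i _ => (map_sum (T i) _ _).symm
    have h2 : ∑ σ ∈ wds n (N+1), ⟪h0, tker T [] σ (g σ)⟫_ℂ
        = ⟪h0, h0⟫_ℂ + ⟪h0, u⟫_ℂ := by
      rw [sum_wds_succ (f := fun σ => ⟪h0, tker T [] σ (g σ)⟫_ℂ)]
      simp only [tker_nil_left, wordOp_nil, ContinuousLinearMap.one_apply,
        wordOp_cons, ContinuousLinearMap.mul_apply]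
      congr 1
      rw [inner_sum]
      refine Finset.sum_congr rfl fun i _ => ?_
      rw [← inner_sum, ← map_sum]
    have h3 : ∀ (i : Fin n), ∀ α ∈ F,
        ∑ σ ∈ wds n (N+1), ⟪g (i::α), tker T (i::α) σ (g σ)⟫_ℂ
          = ⟪wordOp T (i::α) (g (i::α)), h0⟫_ℂ
            + ∑ σ ∈ F, ⟪g (i::α), tker T α σ (g (i::σ))⟫_ℂ := by
      intro i α hα
      rw [sum_wds_succ (f := fun σ => ⟪g (i::α), tker T (i::α) σ (g σ)⟫_ℂ)]
      congr 1
      · rw [tker_nil_right, ContinuousLinearMap.adjoint_inner_right]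
      · rw [Finset.sum_comm]
        refine Finset.sum_congr rfl fun σ _ => ?_
        have hite : ∀ j : Fin n, ⟪g (i::α), tker T (i::α) (j::σ) (g (j::σ))⟫_ℂ
            = if i = j then ⟪g (i::α), tker T α σ (g (i::σ))⟫_ℂ else 0 := by
          intro j
          rcases eq_or_ne i j with rfl | h
          · simp [tker_cons_cons]
          · simp [tker_cons_cons, h]
        simp only [hite]
        rw [Finset.sum_ite_eq]
        simp
    have hu2 : ∑ i, ∑ α ∈ F, ⟪wordOp T (i::α) (g (i::α)), h0⟫_ℂ = ⟪u, h0⟫_ℂ := by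
      rw [huu, sum_inner]
      refine Finset.sum_congr rfl fun i _ => ?_
      rw [hv]
      simp only [wordOp_cons, ContinuousLinearMap.mul_apply]
      rw [map_sum, sum_inner]
    have hQ : (∑ α ∈ wds n (N+1), ∑ σ ∈ wds n (N+1), ⟪g α, tker T α σ (g σ)⟫_ℂ)
        = (⟪h0, h0⟫_ℂ + ⟪h0, u⟫_ℂ) + (⟪u, h0⟫_ℂ
          + ∑ i, ∑ α ∈ F, ∑ σ ∈ F, ⟪g (i::α), tker T α σ (g (i::σ))⟫_ℂ) := by
      rw [sum_wds_succ (f := fun α => ∑ σ ∈ wds n (N+1), ⟪g α, tker T α σ (g σ)⟫_ℂ)]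
      rw [h2]
      congr 1
      rw [← hu2, ← Finset.sum_add_distrib]
      refine Finset.sum_congr rfl fun i _ => ?_
      rw [← Finset.sum_add_distrib]
      exact Finset.sum_congr rfl fun α hα => h3 i α hα
    rw [hW, hQ]
    have hnorm : ‖h0 + u‖^2 = RCLike.re (⟪h0,h0⟫_ℂ + ⟪h0,u⟫_ℂ + (⟪u,h0⟫_ℂ + ⟪u,u⟫_ℂ)) := by
      rw [← inner_self_eq_norm_sq (𝕜 := ℂ) (h0 + u), inner_add_add_self]
      ring_nf
    rw [hnorm]
    simp only [map_add]
    have key : RCLike.re ⟪u, u⟫_ℂ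
        ≤ RCLike.re (∑ i, ∑ α ∈ F, ∑ σ ∈ F, ⟪g (i::α), tker T α σ (g (i::σ))⟫_ℂ) := by
      have h4 : RCLike.re ⟪u, u⟫_ℂ = ‖u‖^2 := inner_self_eq_norm_sq (𝕜 := ℂ) u
      have h5 : ‖u‖^2 ≤ ∑ i, ‖v i‖^2 := col_est hT v
      have h6 : ∑ i, ‖v i‖^2
          ≤ ∑ i, RCLike.re (∑ α ∈ F, ∑ σ ∈ F, ⟪g (i::α), tker T α σ (g (i::σ))⟫_ℂ) := by
        refine Finset.sum_le_sum fun i _ => ?_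
        exact IH (fun α => g (i :: α))
      have h7 : RCLike.re (∑ i, ∑ α ∈ F, ∑ σ ∈ F, ⟪g (i::α), tker T α σ (g (i::σ))⟫_ℂ)
          = ∑ i, RCLike.re (∑ α ∈ F, ∑ σ ∈ F, ⟪g (i::α), tker T α σ (g (i::σ))⟫_ℂ) :=
        map_sum _ _ _
      rw [h7]
      linarith
    linarith


lemma wq_append {n : ℕ} (α τ : Wd n) : wq (α ++ τ) α = τ := by
  simp [wq]

lemma pfx_antisymm {n : ℕ} {α σ : Wd n} (h1 : pfx α σ) (h2 : pfx σ α) : α = σ := by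
  obtain ⟨τ, rfl⟩ := h1
  obtain ⟨τ', hτ'⟩ := h2
  have := congrArg List.length hτ'
  simp only [List.length_append] at this
  have hτ : τ = [] := by
    rw [List.length_eq_zero_iff.symm] at *
    omega
  simp [hτ]

lemma tker_adjoint {n : ℕ} (T : Fin n → (H →L[ℂ] H)) (α σ : Wd n) :
    adjoint (tker T α σ) = tker T σ α := by
  unfold tker
  by_cases h1 : pfx α σ
  · by_cases h2 : pfx σ α
    · have h := pfx_antisymm h1 h2
      subst h
      rw [if_pos h1]
      have hq : wq α α = [] := by simp [wq]
      rw [hq, wordOp_nil]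
      exact ContinuousLinearMap.adjoint_id
    · rw [if_pos h1, if_neg h2, if_pos h1]
  · by_cases h2 : pfx σ α
    · rw [if_neg h1, if_pos h2, if_pos h2, ContinuousLinearMap.adjoint_adjoint]
    · rw [if_neg h1, if_neg h2, if_neg h2, if_neg h1]
      simp


lemma forward_dir {n : ℕ} (S : Set (Wd n)) (hadm : Adm S) (L : Wd n → (H →L[ℂ] H))
    (T : Fin n → (H →L[ℂ] H)) (hT : RowContraction T)
    (hm : ∀ σ ∈ S, wordOp T σ * L ([] : Wd n) = L σ) :
    KerPSD (fun x y : {p : Wd n × Wd n // p.1 ++ p.2 ∈ S} =>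
      K2 L x.1 y.1 - K1 L x.1 y.1) := by
  intro s h
  set k : {p : Wd n × Wd n // p.1 ++ p.2 ∈ S} → H := fun x => L x.1.2 (h x) with hk
  set f : {p : Wd n × Wd n // p.1 ++ p.2 ∈ S} → Wd n := fun x => x.1.1 with hf
  have hLsplit : ∀ τ γ : Wd n, τ ++ γ ∈ S → L (τ ++ γ) = wordOp T τ * L γ := by
    intro τ γ hmem
    have hγ : γ ∈ S := hadm τ γ hmem
    rw [← hm _ hmem, ← hm _ hγ, wordOp_append, mul_assoc]
  have hterm : ∀ x y : {p : Wd n × Wd n // p.1 ++ p.2 ∈ S},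
      ⟪h x, (K2 L x.1 y.1 - K1 L x.1 y.1) (h y)⟫_ℂ
      = ⟪k x, tker T (f x) (f y) (k y)⟫_ℂ
        - ⟪wordOp T (f x) (k x), wordOp T (f y) (k y)⟫_ℂ := by
    rintro ⟨⟨α, β⟩, hx⟩ ⟨⟨σ, γ⟩, hy⟩
    rw [ContinuousLinearMap.sub_apply, inner_sub_right]
    congr 1
    · -- K2 part
      show ⟪_, K2 L (α, β) (σ, γ) _⟫_ℂ = _
      unfold K2 tker
      by_cases h1 : pfx α σ
      · obtain ⟨τ, rfl⟩ := h1
        have h1 : pfx α (α ++ τ) := ⟨τ, rfl⟩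
        rw [if_pos h1, if_pos h1, wq_append]
        have hmem : τ ++ γ ∈ S := by
          apply hadm α
          rw [← List.append_assoc]; exact hy
        rw [ContinuousLinearMap.mul_apply, ContinuousLinearMap.adjoint_inner_right,
          hLsplit τ γ hmem, ContinuousLinearMap.mul_apply]
      · by_cases h2 : pfx σ α
        · obtain ⟨τ, rfl⟩ := h2
          have h2 : pfx σ (σ ++ τ) := ⟨τ, rfl⟩
          rw [if_neg h1, if_neg h1, if_pos h2, if_pos h2, wq_append]
          have hmem : τ ++ β ∈ S := by
            apply hadm σ
            rw [← List.append_assoc]; exact hx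
          rw [ContinuousLinearMap.mul_apply, ContinuousLinearMap.adjoint_inner_right,
            hLsplit τ β hmem, ContinuousLinearMap.mul_apply,
            ← ContinuousLinearMap.adjoint_inner_right]
        · rw [if_neg h1, if_neg h1, if_neg h2, if_neg h2]
          simp
    · -- K1 part
      show ⟪_, K1 L (α, β) (σ, γ) _⟫_ℂ = _
      unfold K1
      rw [ContinuousLinearMap.mul_apply, ContinuousLinearMap.adjoint_inner_right,
        hLsplit α β hx, hLsplit σ γ hy, ContinuousLinearMap.mul_apply,
        ContinuousLinearMap.mul_apply]
  -- rewrite the sum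
  have hgoal : ∑ x ∈ s, ∑ y ∈ s, ⟪h x, (K2 L x.1 y.1 - K1 L x.1 y.1) (h y)⟫_ℂ
      = (∑ x ∈ s, ∑ y ∈ s, ⟪k x, tker T (f x) (f y) (k y)⟫_ℂ)
        - ∑ x ∈ s, ∑ y ∈ s, ⟪wordOp T (f x) (k x), wordOp T (f y) (k y)⟫_ℂ := by
    rw [← Finset.sum_sub_distrib]
    refine Finset.sum_congr rfl fun x _ => ?_
    rw [← Finset.sum_sub_distrib]
    exact Finset.sum_congr rfl fun y _ => hterm x y
  show (0:ℂ) ≤ ∑ x ∈ s, ∑ y ∈ s, ⟪h x, (K2 L x.1 y.1 - K1 L x.1 y.1) (h y)⟫_ℂ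
  rw [hgoal]
  set W := ∑ x ∈ s, wordOp T (f x) (k x) with hWdef
  have hB : ∑ x ∈ s, ∑ y ∈ s, ⟪wordOp T (f x) (k x), wordOp T (f y) (k y)⟫_ℂ
      = ⟪W, W⟫_ℂ := by
    rw [hWdef, sum_inner]
    exact Finset.sum_congr rfl fun x _ => by rw [inner_sum]
  set N := s.sup (fun x => (f x).length) with hN
  have hfx : ∀ x ∈ s, f x ∈ wds n N :=
    fun x hx => mem_wds.mpr (Finset.le_sup (f := fun x => (f x).length) hx)
  set g : Wd n → H := fun α => ∑ x ∈ s.filter (fun x => f x = α), k x with hg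
  have hA : ∑ α ∈ wds n N, ∑ σ ∈ wds n N, ⟪g α, tker T α σ (g σ)⟫_ℂ
      = ∑ x ∈ s, ∑ y ∈ s, ⟪k x, tker T (f x) (f y) (k y)⟫_ℂ := by
    have inner1 : ∀ α, ∀ x ∈ s.filter (fun x => f x = α),
        ∑ σ ∈ wds n N, ∑ y ∈ s.filter (fun y => f y = σ), ⟪k x, tker T α σ (k y)⟫_ℂ
        = ∑ y ∈ s, ⟪k x, tker T (f x) (f y) (k y)⟫_ℂ := by
      intro α x hx
      rw [Finset.mem_filter] at hx
      have : ∀ σ ∈ wds n N, ∑ y ∈ s.filter (fun y => f y = σ), ⟪k x, tker T α σ (k y)⟫_ℂ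
          = ∑ y ∈ s.filter (fun y => f y = σ), ⟪k x, tker T (f x) (f y) (k y)⟫_ℂ := by
        intro σ _
        refine Finset.sum_congr rfl fun y hy => ?_
        rw [Finset.mem_filter] at hy
        rw [hx.2, hy.2]
      rw [Finset.sum_congr rfl this]
      exact Finset.sum_fiberwise_of_maps_to hfx _
    calc ∑ α ∈ wds n N, ∑ σ ∈ wds n N, ⟪g α, tker T α σ (g σ)⟫_ℂ
        = ∑ α ∈ wds n N, ∑ x ∈ s.filter (fun x => f x = α),
            ∑ σ ∈ wds n N, ∑ y ∈ s.filter (fun y => f y = σ), ⟪k x, tker T α σ (k y)⟫_ℂ := by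
          refine Finset.sum_congr rfl fun α _ => ?_
          rw [hg]
          simp only [sum_inner]
          rw [Finset.sum_comm]
          refine Finset.sum_congr rfl fun x _ => ?_
          refine Finset.sum_congr rfl fun σ _ => ?_
          rw [map_sum, inner_sum]
      _ = ∑ α ∈ wds n N, ∑ x ∈ s.filter (fun x => f x = α),
            ∑ y ∈ s, ⟪k x, tker T (f x) (f y) (k y)⟫_ℂ := by
          refine Finset.sum_congr rfl fun α _ => ?_
          exact Finset.sum_congr rfl fun x hx => inner1 α x hx
      _ = ∑ x ∈ s, ∑ y ∈ s, ⟪k x, tker T (f x) (f y) (k y)⟫_ℂ :=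
          Finset.sum_fiberwise_of_maps_to hfx _
  have hWg : W = ∑ α ∈ wds n N, wordOp T α (g α) := by
    rw [hWdef]
    rw [← Finset.sum_fiberwise_of_maps_to hfx (fun x => wordOp T (f x) (k x))]
    refine Finset.sum_congr rfl fun α _ => ?_
    rw [hg, map_sum]
    refine Finset.sum_congr rfl fun x hx => ?_
    rw [Finset.mem_filter] at hx
    rw [hx.2]
  rw [← hA, hB]
  set Qc := ∑ α ∈ wds n N, ∑ σ ∈ wds n N, ⟪g α, tker T α σ (g σ)⟫_ℂ with hQc
  have hsym : (starRingEnd ℂ) Qc = Qc := by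
    rw [hQc, map_sum]
    rw [Finset.sum_comm]
    refine Finset.sum_congr rfl fun σ _ => ?_
    rw [map_sum]
    refine Finset.sum_congr rfl fun α _ => ?_
    rw [inner_conj_symm, ← tker_adjoint, ContinuousLinearMap.adjoint_inner_left]
  have him : Qc.im = 0 := by
    have := congrArg Complex.im hsym
    simp only [Complex.conj_im] at this
    linarith
  have hre : ‖W‖^2 ≤ RCLike.re Qc := by
    rw [hQc, hWg]
    exact tker_psd hT N g
  rw [Complex.le_def]
  constructor
  · simp only [Complex.zero_re, Complex.sub_re]
    have h1 : (⟪W, W⟫_ℂ).re = ‖W‖^2 := by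
      rw [← inner_self_eq_norm_sq (𝕜 := ℂ) W]; rfl
    have h2 : Qc.re = RCLike.re Qc := rfl
    rw [h1, h2]
    linarith
  · simp only [Complex.zero_im, Complex.sub_im, him]
    have : (⟪W, W⟫_ℂ).im = 0 := by
      have := inner_self_im (𝕜 := ℂ) (x := W)
      exact this
    rw [this]
    ring


section Reverse

variable {n : ℕ} {S : Set (Wd n)} {L : Wd n → (H →L[ℂ] H)}

/-- index type for generators of the `i`-th space -/
abbrev RIdx (S : Set (Wd n)) (i : Fin n) := {σ : Wd n // (i :: σ) ∈ S}

/-- `u i` sends a formal combination to `∑ L σ h` -/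
def uMap (L : Wd n → (H →L[ℂ] H)) (S : Set (Wd n)) (i : Fin n) :
    (RIdx S i →₀ H) →ₗ[ℂ] H :=
  Finsupp.lsum ℂ (fun σ => (L σ.1 : H →L[ℂ] H).toLinearMap)

def wMap (L : Wd n → (H →L[ℂ] H)) (S : Set (Wd n)) (i : Fin n) :
    (RIdx S i →₀ H) →ₗ[ℂ] H :=
  Finsupp.lsum ℂ (fun σ => (L (i :: σ.1) : H →L[ℂ] H).toLinearMap)

lemma uMap_single (i : Fin n) (σ : RIdx S i) (x : H) :
    uMap L S i (Finsupp.single σ x) = L σ.1 x := by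
  simp [uMap, Finsupp.sum_single_index]

lemma wMap_single (i : Fin n) (σ : RIdx S i) (x : H) :
    wMap L S i (Finsupp.single σ x) = L (i :: σ.1) x := by
  simp [wMap, Finsupp.sum_single_index]

lemma keyineq (hK : KerPSD (fun x y : {p : Wd n × Wd n // p.1 ++ p.2 ∈ S} =>
      K2 L x.1 y.1 - K1 L x.1 y.1))
    (c : (i : Fin n) → (RIdx S i →₀ H)) :
    ‖∑ i, wMap L S i (c i)‖^2 ≤ ∑ i, ‖uMap L S i (c i)‖^2 := by
  classical
  -- the points
  set X := {p : Wd n × Wd n // p.1 ++ p.2 ∈ S} with hX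
  have hmem : ∀ (i : Fin n) (σ : RIdx S i), ([i] ++ σ.1 : Wd n) ∈ S := fun i σ => σ.2
  set p : (Σ i : Fin n, RIdx S i) → X := fun q => ⟨([q.1], q.2.1), hmem q.1 q.2⟩ with hp
  have hpinj : Function.Injective p := by
    rintro ⟨i, σ⟩ ⟨j, τ⟩ hq
    have h1 : (([i] : Wd n), σ.1) = (([j] : Wd n), τ.1) := congrArg Subtype.val hq
    have hij : i = j := by
      have := congrArg Prod.fst h1
      simpa using this
    subst hij
    have hστ : σ = τ := Subtype.ext (by simpa using congrArg Prod.snd h1)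
    rw [hστ]
  set hfun : X → H := fun x =>
    if hx : ∃ q : (Σ i : Fin n, RIdx S i), p q = x then (c hx.choose.1) hx.choose.2
    else 0 with hhfun
  have hfun_p : ∀ q, hfun (p q) = (c q.1) q.2 := by
    intro q
    have hex : ∃ q' : (Σ i : Fin n, RIdx S i), p q' = p q := ⟨q, rfl⟩
    rw [hhfun]
    simp only [dif_pos hex]
    have h2 : hex.choose = q := hpinj hex.choose_spec
    rw [h2]
  set s : Finset X :=
    Finset.univ.biUnion (fun i : Fin n => (c i).support.image (fun σ => p ⟨i, σ⟩)) with hs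
  have hKs := hK s hfun
  -- compute the double sum
  have hsum : ∀ F : X → X → ℂ,
      ∑ x ∈ s, ∑ y ∈ s, F x y
        = ∑ i, ∑ σ ∈ (c i).support, ∑ j, ∑ τ ∈ (c j).support,
            F (p ⟨i, σ⟩) (p ⟨j, τ⟩) := by
    intro F
    have hdisj : ∀ (t : Finset X) (G : X → ℂ),
        (∑ x ∈ s, G x) = ∑ i, ∑ σ ∈ (c i).support, G (p ⟨i, σ⟩) := by
      intro t G
      rw [hs, Finset.sum_biUnion]
      · refine Finset.sum_congr rfl fun i _ => ?_
        rw [Finset.sum_image]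
        intro a _ b _ hab
        have := hpinj hab
        simpa using this
      · intro i _ j _ hij
        simp only [Finset.disjoint_left, Finset.mem_image]
        rintro a ⟨x, _, rfl⟩ ⟨y, _, hxy⟩
        apply hij
        have := congrArg (fun z : X => z.1.1) hxy
        simpa [hp] using this.symm
    rw [hdisj s (fun x => ∑ y ∈ s, F x y)]
    refine Finset.sum_congr rfl fun i _ => Finset.sum_congr rfl fun σ _ => ?_
    exact hdisj s (fun y => F (p ⟨i, σ⟩) y)
  rw [hsum] at hKs
  -- evaluate the kernel at these points
  have hterm : ∀ (i : Fin n) (σ : RIdx S i) (j : Fin n) (τ : RIdx S j),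
      ⟪hfun (p ⟨i, σ⟩), (K2 L (p ⟨i,σ⟩).1 (p ⟨j,τ⟩).1 - K1 L (p ⟨i,σ⟩).1 (p ⟨j,τ⟩).1)
        (hfun (p ⟨j, τ⟩))⟫_ℂ
      = (if i = j then ⟪L σ.1 ((c i) σ), L τ.1 ((c j) τ)⟫_ℂ else 0)
        - ⟪L (i :: σ.1) ((c i) σ), L (j :: τ.1) ((c j) τ)⟫_ℂ := by
    intro i σ j τ
    rw [hfun_p, hfun_p]
    rw [ContinuousLinearMap.sub_apply, inner_sub_right]
    congr 1
    · -- K2 part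
      show ⟪_, K2 L ([i], σ.1) ([j], τ.1) _⟫_ℂ = _
      unfold K2
      have hpfx : pfx ([i] : Wd n) [j] ↔ i = j := by
        constructor
        · rintro ⟨ρ, hρ⟩
          rw [List.cons_append, List.nil_append] at hρ
          injection hρ with h1 _
          exact h1.symm
        · rintro rfl; exact ⟨[], rfl⟩
      rcases eq_or_ne i j with rfl | hij
      · rw [if_pos (hpfx.mpr rfl), if_pos rfl]
        have hwq : wq ([i] : Wd n) [i] = [] := by simp [wq]
        rw [hwq, List.nil_append, ContinuousLinearMap.mul_apply,
          ContinuousLinearMap.adjoint_inner_right]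
      · rw [if_neg (fun hc => hij (hpfx.mp hc)), if_neg, if_neg hij]
        · simp
        · rw [show pfx ([j] : Wd n) [i] ↔ j = i from by
            constructor
            · rintro ⟨ρ, hρ⟩
              rw [List.cons_append, List.nil_append] at hρ
              injection hρ with h1 _
              exact h1.symm
            · rintro rfl; exact ⟨[], rfl⟩]
          exact fun hc => hij hc.symm
    · -- K1 part
      show ⟪_, K1 L ([i], σ.1) ([j], τ.1) _⟫_ℂ = _
      unfold K1
      rw [ContinuousLinearMap.mul_apply, ContinuousLinearMap.adjoint_inner_right]
      rfl
  have hu_eq : ∀ i, uMap L S i (c i) = ∑ σ ∈ (c i).support, L σ.1 ((c i) σ) := by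
    intro i; rfl
  have hw_eq : ∀ i, wMap L S i (c i) = ∑ σ ∈ (c i).support, L (i :: σ.1) ((c i) σ) := by
    intro i; rfl
  set W := ∑ i, wMap L S i (c i) with hWdef
  have hval : ∑ i, ∑ σ ∈ (c i).support, ∑ j, ∑ τ ∈ (c j).support,
        ⟪hfun (p ⟨i, σ⟩), (K2 L (p ⟨i,σ⟩).1 (p ⟨j,τ⟩).1 - K1 L (p ⟨i,σ⟩).1 (p ⟨j,τ⟩).1)
          (hfun (p ⟨j, τ⟩))⟫_ℂ
      = (∑ i, ⟪uMap L S i (c i), uMap L S i (c i)⟫_ℂ) - ⟪W, W⟫_ℂ := by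
    simp only [hterm]
    have hWW : ⟪W, W⟫_ℂ = ∑ i, ⟪wMap L S i (c i), W⟫_ℂ := by
      conv_lhs => rw [hWdef]
      rw [sum_inner]
    rw [hWW, ← Finset.sum_sub_distrib]
    refine Finset.sum_congr rfl fun i _ => ?_
    have hstep : ∀ σ ∈ (c i).support,
        (∑ j, ∑ τ ∈ (c j).support,
          ((if i = j then ⟪L σ.1 ((c i) σ), L τ.1 ((c j) τ)⟫_ℂ else 0)
            - ⟪L (i :: σ.1) ((c i) σ), L (j :: τ.1) ((c j) τ)⟫_ℂ))
        = ⟪L σ.1 ((c i) σ), uMap L S i (c i)⟫_ℂ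
          - ⟪L (i :: σ.1) ((c i) σ), W⟫_ℂ := by
      intro σ _
      have hsplit2 : ∀ j, ∑ τ ∈ (c j).support,
          ((if i = j then ⟪L σ.1 ((c i) σ), L τ.1 ((c j) τ)⟫_ℂ else 0)
            - ⟪L (i :: σ.1) ((c i) σ), L (j :: τ.1) ((c j) τ)⟫_ℂ)
          = (if i = j then ⟪L σ.1 ((c i) σ), uMap L S j (c j)⟫_ℂ else 0)
            - ⟪L (i :: σ.1) ((c i) σ), wMap L S j (c j)⟫_ℂ := by
        intro j
        rw [Finset.sum_sub_distrib]
        congr 1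
        · by_cases hij : i = j
          · simp only [if_pos hij]
            rw [hu_eq j, inner_sum]
          · simp [hij]
        · rw [hw_eq j, inner_sum]
      rw [Finset.sum_congr rfl (fun j _ => hsplit2 j), Finset.sum_sub_distrib,
        Finset.sum_ite_eq, hWdef, inner_sum]
      simp
    rw [Finset.sum_congr rfl hstep, Finset.sum_sub_distrib]
    congr 1
    · conv_rhs => rw [hu_eq i]
      rw [sum_inner]
      exact Finset.sum_congr rfl fun σ _ => by rw [hu_eq i]
    · conv_rhs => rw [hw_eq i]
      rw [sum_inner]
  rw [hval] at hKs
  have hre := (Complex.le_def.mp hKs).1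
  simp only [Complex.zero_re, Complex.sub_re] at hre
  have h1 : (⟪W, W⟫_ℂ).re = ‖W‖^2 := by
    rw [← inner_self_eq_norm_sq (𝕜 := ℂ) W]; rfl
  have h2 : (∑ i, ⟪uMap L S i (c i), uMap L S i (c i)⟫_ℂ).re
      = ∑ i, ‖uMap L S i (c i)‖^2 := by
    rw [show (∑ i, ⟪uMap L S i (c i), uMap L S i (c i)⟫_ℂ).re
        = RCLike.re (∑ i, ⟪uMap L S i (c i), uMap L S i (c i)⟫_ℂ) from rfl, map_sum]
    exact Finset.sum_congr rfl fun i _ => inner_self_eq_norm_sq (𝕜 := ℂ) _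
  rw [h1, h2] at hre
  rw [hWdef] at *
  linarith


lemma reverse_dir (hadm : Adm S)
    (hK : KerPSD (fun x y : {p : Wd n × Wd n // p.1 ++ p.2 ∈ S} =>
      K2 L x.1 y.1 - K1 L x.1 y.1)) :
    ∃ T : Fin n → (H →L[ℂ] H), RowContraction T ∧
      ∀ σ ∈ S, wordOp T σ * L ([] : Wd n) = L σ := by
  classical
  -- single-`i` estimate
  have hsingle : ∀ (i : Fin n) (f : RIdx S i →₀ H),
      ‖wMap L S i f‖ ≤ ‖uMap L S i f‖ := by
    intro i f
    set c : (j : Fin n) → (RIdx S j →₀ H) :=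
      Function.update (fun j => (0 : RIdx S j →₀ H)) i f with hc
    have h1 := keyineq hK c
    have hci : c i = f := by rw [hc]; simp
    have hcj : ∀ j, j ≠ i → c j = 0 := by
      intro j hj
      rw [hc]
      simp [Function.update_of_ne hj]
    have h2 : ∑ j, wMap L S j (c j) = wMap L S i f := by
      rw [Finset.sum_eq_single i]
      · rw [hci]
      · intro j _ hj; rw [hcj j hj, map_zero]
      · intro hi; exact absurd (Finset.mem_univ i) hi
    have h3 : ∑ j, ‖uMap L S j (c j)‖^2 = ‖uMap L S i f‖^2 := by
      rw [Finset.sum_eq_single i]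
      · rw [hci]
      · intro j _ hj; rw [hcj j hj, map_zero, norm_zero]; ring
      · intro hi; exact absurd (Finset.mem_univ i) hi
    rw [h2, h3] at h1
    nlinarith [norm_nonneg (wMap L S i f), norm_nonneg (uMap L S i f)]
  have hker : ∀ i, LinearMap.ker (uMap L S i) ≤ LinearMap.ker (wMap L S i) := by
    intro i f hf
    rw [LinearMap.mem_ker] at *
    have h := hsingle i f
    rw [hf, norm_zero] at h
    exact norm_le_zero_iff.mp h
  set ψlin : (i : Fin n) → (LinearMap.range (uMap L S i) →ₗ[ℂ] H) := fun i =>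
    ((LinearMap.ker (uMap L S i)).liftQ (wMap L S i) (hker i)).comp
      (uMap L S i).quotKerEquivRange.symm.toLinearMap with hψlindef
  have hψlin : ∀ (i : Fin n) (f : RIdx S i →₀ H)
      (hm : uMap L S i f ∈ LinearMap.range (uMap L S i)),
      ψlin i ⟨uMap L S i f, hm⟩ = wMap L S i f := by
    intro i f hm
    have h1 : (uMap L S i).quotKerEquivRange (Submodule.Quotient.mk f)
        = ⟨uMap L S i f, hm⟩ :=
      Subtype.ext (LinearMap.quotKerEquivRange_apply_mk _ f)
    rw [hψlindef]
    simp only [LinearMap.comp_apply, LinearEquiv.coe_toLinearMap, ← h1,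
      LinearEquiv.symm_apply_apply]
    exact Submodule.liftQ_apply _ _ f
  have hψbound : ∀ (i : Fin n) (m : LinearMap.range (uMap L S i)),
      ‖ψlin i m‖ ≤ 1 * ‖m‖ := by
    intro i m
    obtain ⟨f, hf⟩ := m.2
    have hmm : m = ⟨uMap L S i f, by rw [hf]; exact m.2⟩ := Subtype.ext hf.symm
    rw [hmm, hψlin i f, one_mul]
    exact hsingle i f
  set ψc : (i : Fin n) → (LinearMap.range (uMap L S i) →L[ℂ] H) := fun i =>
    LinearMap.mkContinuous (ψlin i) 1 (hψbound i) with hψcdef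
  have hle : ∀ i, LinearMap.range (uMap L S i)
      ≤ (LinearMap.range (uMap L S i)).topologicalClosure :=
    fun i => Submodule.le_topologicalClosure _
  set incl : (i : Fin n) → (LinearMap.range (uMap L S i) →L[ℂ]
      (LinearMap.range (uMap L S i)).topologicalClosure) := fun i =>
    LinearMap.mkContinuous (Submodule.inclusion (hle i)) 1
      (fun x => by rw [one_mul]; exact le_of_eq rfl) with hincldef
  have hisom : ∀ i, Isometry (incl i) :=
    fun i => AddMonoidHomClass.isometry_of_norm _ (fun x => rfl)
  have hdense : ∀ i, DenseRange (incl i) := by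
    intro i y
    have h2 : ((y : H)) ∈ closure ((LinearMap.range (uMap L S i) : Set H)) := by
      have := y.2
      rwa [← Submodule.topologicalClosure_coe]
    rw [closure_subtype]
    convert h2 using 2
    ext z
    constructor
    · rintro ⟨w, ⟨m, rfl⟩, rfl⟩; exact m.2
    · rintro hz; exact ⟨incl i ⟨z, hz⟩, ⟨⟨z, hz⟩, rfl⟩, rfl⟩
  letI instC : ∀ i, CompleteSpace ((LinearMap.range (uMap L S i)).topologicalClosure) :=
    fun i => (Submodule.isClosed_topologicalClosure _).completeSpace_coe
  set ψbar : (i : Fin n) →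
      ((LinearMap.range (uMap L S i)).topologicalClosure →L[ℂ] H) := fun i =>
    (ψc i).extend (incl i) with hψbardef
  set P : (i : Fin n) → (H →L[ℂ] (LinearMap.range (uMap L S i)).topologicalClosure) :=
    fun i => Submodule.orthogonalProjectionOnto (K := _) with hPdef
  set T : Fin n → (H →L[ℂ] H) := fun i => (ψbar i).comp (P i) with hTdef
  have hPincl : ∀ (i : Fin n) (m : LinearMap.range (uMap L S i)),
      P i (m : H) = incl i m :=
    fun i m => Submodule.orthogonalProjectionOnto_mem_subspace_eq_self (incl i m)
  have hTapply : ∀ (i : Fin n) (f : RIdx S i →₀ H),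
      T i (uMap L S i f) = wMap L S i f := by
    intro i f
    have hm : uMap L S i f ∈ LinearMap.range (uMap L S i) :=
      LinearMap.mem_range_self _ f
    have h2 : P i (uMap L S i f) = incl i ⟨uMap L S i f, hm⟩ := hPincl i ⟨_, hm⟩
    show ψbar i (P i (uMap L S i f)) = _
    rw [h2, hψbardef]
    rw [ContinuousLinearMap.extend_eq _ (hdense i) (hisom i).isUniformInducing]
    exact hψlin i f hm
  have hTL : ∀ (i : Fin n) (σ : Wd n), (i :: σ) ∈ S → ∀ x : H,
      T i (L σ x) = L (i :: σ) x := by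
    intro i σ hσ x
    have h := hTapply i (Finsupp.single ⟨σ, hσ⟩ x)
    rwa [uMap_single, wMap_single] at h
  have hrc : RowContraction T := by
    apply rc_of_col
    intro v
    set Φ : (Fin n → H) → ℝ :=
      fun m => ‖∑ i, ψbar i (P i (m i))‖^2 - ∑ i, ‖(P i (m i) : H)‖^2 with hΦ
    have hcont : Continuous Φ := by
      apply Continuous.sub
      · apply Continuous.pow
        apply Continuous.norm
        apply continuous_finset_sum
        intro i _
        exact ((ψbar i).comp (P i)).continuous.comp (continuous_apply i)
      · apply continuous_finset_sum
        intro i _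
        exact ((continuous_subtype_val.comp
          ((P i).continuous.comp (continuous_apply i))).norm).pow 2
    have hC0 : ∀ m : Fin n → H,
        (∀ i, m i ∈ LinearMap.range (uMap L S i)) → Φ m ≤ 0 := by
      intro m hm
      have hm' : ∀ i, ∃ f, uMap L S i f = m i := fun i => hm i
      choose f hf using hm'
      have h1 : ∀ i, P i (m i) = incl i ⟨m i, hm i⟩ := fun i => hPincl i ⟨m i, hm i⟩
      have h2 : ∀ i, ψbar i (P i (m i)) = wMap L S i (f i) := by
        intro i
        rw [h1, hψbardef, ContinuousLinearMap.extend_eq _ (hdense i) (hisom i).isUniformInducing]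
        have he : (⟨m i, hm i⟩ : LinearMap.range (uMap L S i))
            = ⟨uMap L S i (f i), LinearMap.mem_range_self _ _⟩ :=
          Subtype.ext (hf i).symm
        rw [hψcdef]
        show ψlin i ⟨m i, hm i⟩ = _
        rw [he]
        exact hψlin i (f i) _
      have h3 : ∀ i, ‖(P i (m i) : H)‖ = ‖uMap L S i (f i)‖ := by
        intro i
        rw [h1 i]
        show ‖m i‖ = _
        rw [← hf i]
      have h4 := keyineq hK f
      rw [hΦ]
      simp only [h2, h3]
      linarith
    have hC : ∀ m : Fin n → H,
        (∀ i, (m i) ∈ closure ((LinearMap.range (uMap L S i)) : Set H)) → Φ m ≤ 0 := by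
      intro m hm
      have hclosed : IsClosed {m : Fin n → H | Φ m ≤ 0} :=
        isClosed_le hcont continuous_const
      have hsub : Set.pi Set.univ (fun i => ((LinearMap.range (uMap L S i)) : Set H))
          ⊆ {m | Φ m ≤ 0} := fun m' hm' => hC0 m' (fun i => hm' i trivial)
      have hcl : Set.pi Set.univ
          (fun i => closure ((LinearMap.range (uMap L S i)) : Set H))
          ⊆ {m | Φ m ≤ 0} := by
        rw [← closure_pi_set]
        exact closure_minimal hsub hclosed
      exact hcl (fun i _ => hm i)
    set m : Fin n → H := fun i => (P i (v i) : H) with hm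
    have hmem : ∀ i, m i ∈ closure ((LinearMap.range (uMap L S i)) : Set H) := by
      intro i
      rw [← Submodule.topologicalClosure_coe]
      exact (P i (v i)).2
    have hΦm := hC m hmem
    have hPm : ∀ i, P i (m i) = P i (v i) :=
      fun i => Submodule.orthogonalProjectionOnto_mem_subspace_eq_self (P i (v i))
    rw [hΦ] at hΦm
    simp only [hPm] at hΦm
    have hT2 : ∀ i, ψbar i (P i (v i)) = T i (v i) := fun i => rfl
    simp only [hT2] at hΦm
    have hPnorm : ∀ i, ‖(P i (v i) : H)‖ ≤ ‖v i‖ := by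
      intro i
      calc ‖(P i (v i) : H)‖ = ‖P i (v i)‖ := rfl
        _ ≤ ‖P i‖ * ‖v i‖ := (P i).le_opNorm _
        _ ≤ 1 * ‖v i‖ :=
            mul_le_mul_of_nonneg_right (Submodule.orthogonalProjectionOnto_norm_le (K := _)) (norm_nonneg _)
        _ = ‖v i‖ := one_mul _
    have hsum2 : ∑ i, ‖(P i (v i) : H)‖^2 ≤ ∑ i, ‖v i‖^2 :=
      Finset.sum_le_sum fun i _ => pow_le_pow_left₀ (norm_nonneg _) (hPnorm i) 2
    linarith
  refine ⟨T, hrc, ?_⟩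
  have moment : ∀ σ : Wd n, σ ∈ S → wordOp T σ * L ([] : Wd n) = L σ := by
    intro σ
    induction σ with
    | nil => intro _; rw [wordOp_nil, one_mul]
    | cons i σ' IH =>
      intro hσ
      have hσ' : σ' ∈ S := hadm [i] σ' hσ
      rw [wordOp_cons, mul_assoc, IH hσ']
      ext x
      exact hTL i σ' hσ x
  exact moment

end Reverse

/-- `L : Σ → B(H)` is a moment map for Poisson transforms on
`C*(S₁,…,Sₙ)` (equivalently: there is a row contraction `T` with `T_σ L(g₀) = L(σ)`
for all `σ ∈ Σ`) iff `K₁ ≤ K₂` as kernels on `Λ_Σ`. -/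
theorem stmt0 {n : ℕ} (hn : 0 < n) (S : Set (Wd n)) (hne : S.Nonempty) (hadm : Adm S)
    (L : Wd n → (H →L[ℂ] H)) :
    (∃ T : Fin n → (H →L[ℂ] H), RowContraction T ∧
        ∀ σ ∈ S, wordOp T σ * L ([] : Wd n) = L σ) ↔
      KerPSD (fun x y : {p : Wd n × Wd n // p.1 ++ p.2 ∈ S} =>
        K2 L x.1 y.1 - K1 L x.1 y.1) := by
  constructor
  · rintro ⟨T, hT, hm⟩
    exact forward_dir S hadm L T hT hm
  · intro hK
    exact reverse_dir hadm hK

end
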